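/- arXiv:1812.10475 — 2 statements merged into one kernel-verified Lean document; each statement's English description precedes it below -/
import Mathlib

section
/- For every n ≥ 0: E[Z₁(n)·Z₂(n)] = E[Z₂(n)²]. -/
open Finset Filter

namespace Broadcast

/-- The root distribution `π = (θ/2, θ/2, (1-θ)/2, (1-θ)/2)`. -/
noncomputable def rootDist (θ : ℝ) (i : Fin 4) : ℝ :=
  if (i : ℕ) < 2 then θ / 2 else (1 - θ) / 2

/-- The transition matrix `P i j = λ · 1{i=j} + (1-λ) π_j`. -/
noncomputable def trans (θ lam : ℝ) (i j : Fin 4) : ℝ :=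
  (if i = j then lam else 0) + (1 - lam) * rootDist θ j

/-- Vertices at level `n` of the infinite rooted `d`-ary tree, encoded as paths. -/
abbrev Vtx (d n : ℕ) := Fin n → Fin d

/-- Configurations (assignments of states) on level `n`. -/
abbrev Config (d n : ℕ) := Vtx d n → Fin 4

/-- Restriction of a level-`(n+1)` configuration to the subtree of the `j`-th child
of the root. -/
def restrict {d n : ℕ} (j : Fin d) (A : Config d (n + 1)) : Config d n :=
  fun p => A (Fin.cons j p)

/-- `lik θ λ d n i A` is the probability of observing the configuration `A` on level `n`,
given that the root is in state `i` (the broadcasting process). -/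
noncomputable def lik (θ lam : ℝ) (d : ℕ) : (n : ℕ) → Fin 4 → Config d n → ℝ
  | 0, i, A => if A Fin.elim0 = i then 1 else 0
  | n + 1, i, A =>
      ∏ j : Fin d, ∑ k : Fin 4, trans θ lam i k * lik θ lam d n k (restrict j A)

/-- Unconditional probability of observing the configuration `A` on level `n`. -/
noncomputable def marg (θ lam : ℝ) (d n : ℕ) (A : Config d n) : ℝ :=
  ∑ i : Fin 4, rootDist θ i * lik θ lam d n i A

/-- The posterior `f_n(i, A) = P(σ_ρ = i ∣ σ(n) = A)`. -/
noncomputable def post (θ lam : ℝ) (d n : ℕ) (i : Fin 4) (A : Config d n) : ℝ :=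
  rootDist θ i * lik θ lam d n i A / marg θ lam d n A

/-- Expectation of `g(σ(n))` conditioned on the root being in state `r`,
i.e. `E g(σ^r(n))`. -/
noncomputable def condE (θ lam : ℝ) (d n : ℕ) (r : Fin 4) (g : Config d n → ℝ) : ℝ :=
  ∑ A : Config d n, lik θ lam d n r A * g A

/-- Unconditional expectation of `g(σ(n))`. -/
noncomputable def uncondE (θ lam : ℝ) (d n : ℕ) (g : Config d n → ℝ) : ℝ :=
  ∑ A : Config d n, marg θ lam d n A * g A

/-- `x_{n;θ} = E f_n(1, σ¹(n)) - θ/2`. -/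
noncomputable def xT (θ lam : ℝ) (d n : ℕ) : ℝ :=
  condE θ lam d n 0 (fun A => post θ lam d n 0 A) - θ / 2

/-- `y_{n;θ} = E f_n(2, σ¹(n)) - θ/2`. -/
noncomputable def yT (θ lam : ℝ) (d n : ℕ) : ℝ :=
  condE θ lam d n 0 (fun A => post θ lam d n 1 A) - θ / 2

/-- `z_{n;θ} = E f_n(1, σ³(n)) - θ/2`. -/
noncomputable def zT (θ lam : ℝ) (d n : ℕ) : ℝ :=
  condE θ lam d n 2 (fun A => post θ lam d n 0 A) - θ / 2

/-- `x_{n;1-θ} = E f_n(3, σ³(n)) - (1-θ)/2`. -/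
noncomputable def xH (θ lam : ℝ) (d n : ℕ) : ℝ :=
  condE θ lam d n 2 (fun A => post θ lam d n 2 A) - (1 - θ) / 2

/-- `y_{n;1-θ} = E f_n(4, σ³(n)) - (1-θ)/2`. -/
noncomputable def yH (θ lam : ℝ) (d n : ℕ) : ℝ :=
  condE θ lam d n 2 (fun A => post θ lam d n 3 A) - (1 - θ) / 2

/-- `z_{n;1-θ} = E f_n(3, σ¹(n)) - (1-θ)/2`. -/
noncomputable def zH (θ lam : ℝ) (d n : ℕ) : ℝ :=
  condE θ lam d n 0 (fun A => post θ lam d n 2 A) - (1 - θ) / 2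

/-- `u_{n;θ} = E (f_n(1, σ¹(n)) - θ/2)²`. -/
noncomputable def uT (θ lam : ℝ) (d n : ℕ) : ℝ :=
  condE θ lam d n 0 (fun A => (post θ lam d n 0 A - θ / 2) ^ 2)

/-- `v_{n;θ} = E (f_n(2, σ¹(n)) - θ/2)²`. -/
noncomputable def vT (θ lam : ℝ) (d n : ℕ) : ℝ :=
  condE θ lam d n 0 (fun A => (post θ lam d n 1 A - θ / 2) ^ 2)

/-- `w_{n;θ} = E (f_n(1, σ³(n)) - θ/2)²`. -/
noncomputable def wT (θ lam : ℝ) (d n : ℕ) : ℝ :=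
  condE θ lam d n 2 (fun A => (post θ lam d n 0 A - θ / 2) ^ 2)

/-- `w_{n;1-θ} = E (f_n(3, σ¹(n)) - (1-θ)/2)²`. -/
noncomputable def wH (θ lam : ℝ) (d n : ℕ) : ℝ :=
  condE θ lam d n 0 (fun A => (post θ lam d n 2 A - (1 - θ) / 2) ^ 2)

/-- `Y_{ij}(n) = f_n(i, σ_j(n+1))`, viewed as a function of the level-`(n+1)`
configuration. -/
noncomputable def Yf (θ lam : ℝ) (d n : ℕ) (i : Fin 4) (j : Fin d)
    (A : Config d (n + 1)) : ℝ :=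
  post θ lam d n i (restrict j A)

/-- `Z_i(n)`, viewed as a function of the level-`(n+1)` configuration. -/
noncomputable def Zf (θ lam : ℝ) (d n : ℕ) (i : Fin 4) (A : Config d (n + 1)) : ℝ :=
  if (i : ℕ) < 2 then
    ∏ j : Fin d, (1 + (2 * lam / θ) * (Yf θ lam d n i j A - θ / 2))
  else
    ∏ j : Fin d, (1 + (2 * lam / (1 - θ)) * (Yf θ lam d n i j A - (1 - θ) / 2))

/-- `S = (θ/2)Z₁ + (θ/2)Z₂ + ((1-θ)/2)Z₃ + ((1-θ)/2)Z₄`. -/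
noncomputable def Sf (θ lam : ℝ) (d n : ℕ) (A : Config d (n + 1)) : ℝ :=
  θ / 2 * Zf θ lam d n 0 A + θ / 2 * Zf θ lam d n 1 A
    + (1 - θ) / 2 * Zf θ lam d n 2 A + (1 - θ) / 2 * Zf θ lam d n 3 A

/-- Total variation distance between the laws of `σ^i(n)` and `σ^j(n)`. -/
noncomputable def dTV (θ lam : ℝ) (d n : ℕ) (i j : Fin 4) : ℝ :=
  (∑ A : Config d n, |lik θ lam d n i A - lik θ lam d n j A|) / 2

/-- The model is reconstructible if for some pair of root states the total variation
distance between the conditioned level-`n` configurations does not vanish. -/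
def Reconstructible (θ lam : ℝ) (d : ℕ) : Prop :=
  ∃ i j : Fin 4, 0 < Filter.limsup (fun n => dTV θ lam d n i j) Filter.atTop

/-- Probability that the root is in state `i` and the states at the vertices
`v 1, …, v k ∈ L(M)` are `c 1, …, c k`. -/
noncomputable def jointRootEvent (θ lam : ℝ) (d M k : ℕ) (v : Fin k → Vtx d M)
    (c : Fin k → Fin 4) (i : Fin 4) : ℝ :=
  ∑ A : Config d M,
    if ∀ t, A (v t) = c t then rootDist θ i * lik θ lam d M i A else 0

/-- Conditional probability `P(σ_ρ = i ∣ σ_{v t} = c t, 1 ≤ t ≤ k)`. -/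
noncomputable def condRoot (θ lam : ℝ) (d M k : ℕ) (v : Fin k → Vtx d M)
    (c : Fin k → Fin 4) (i : Fin 4) : ℝ :=
  jointRootEvent θ lam d M k v c i / ∑ i' : Fin 4, jointRootEvent θ lam d M k v c i'


/-- The state-swap `0 ↔ 1`. -/
noncomputable def sw : Fin 4 ≃ Fin 4 := Equiv.swap 0 1

lemma sw0 : sw 0 = 1 := rfl
lemma sw1 : sw 1 = 0 := rfl

lemma rootDist_sw (θ : ℝ) (j : Fin 4) : rootDist θ (sw j) = rootDist θ j := by
  fin_cases j <;> rfl

lemma trans_sw (θ lam : ℝ) (i j : Fin 4) : trans θ lam (sw i) (sw j) = trans θ lam i j := by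
  unfold trans
  rw [rootDist_sw]
  congr 1
  simp [sw.injective.eq_iff]

lemma lik_comp (θ lam : ℝ) (d : ℕ) : ∀ (n : ℕ) (i : Fin 4) (A : Config d n),
    lik θ lam d n i (sw ∘ A) = lik θ lam d n (sw i) A := by
  intro n
  induction n with
  | zero =>
    intro i A
    simp only [lik, Function.comp_apply]
    have swsw : ∀ x : Fin 4, sw (sw x) = x := fun x => Equiv.swap_apply_self 0 1 x
    have hiff : sw (A Fin.elim0) = i ↔ A Fin.elim0 = sw i :=
      ⟨fun h => by rw [← h, swsw], fun h => by rw [h, swsw]⟩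
    simp only [hiff]
  | succ n ih =>
    intro i A
    simp only [lik]
    refine Finset.prod_congr rfl fun j _ => ?_
    have hres : restrict j (sw ∘ A) = sw ∘ restrict j A := rfl
    rw [hres]
    refine Fintype.sum_equiv sw
      (fun k => trans θ lam i k * lik θ lam d n k ((sw ∘ restrict j A)))
      (fun k => trans θ lam (sw i) k * lik θ lam d n k (restrict j A)) fun k => ?_
    rw [ih k (restrict j A), trans_sw]

lemma marg_sw (θ lam : ℝ) (d n : ℕ) (A : Config d n) :
    marg θ lam d n (sw ∘ A) = marg θ lam d n A := by
  unfold marg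
  refine Fintype.sum_equiv sw (fun i => rootDist θ i * lik θ lam d n i (sw ∘ A))
    (fun i => rootDist θ i * lik θ lam d n i A) fun i => ?_
  rw [lik_comp, rootDist_sw]

lemma post_sw (θ lam : ℝ) (d n : ℕ) (i : Fin 4) (A : Config d n) :
    post θ lam d n i (sw ∘ A) = post θ lam d n (sw i) A := by
  unfold post
  rw [lik_comp, marg_sw, rootDist_sw]

/-- The bijection between level-`(n+1)` configurations and `d`-tuples of level-`n`
configurations. -/
def childEquiv (d n : ℕ) : (Fin d → Config d n) ≃ Config d (n + 1) where
  toFun g v := g (v 0) (Fin.tail v)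
  invFun A j := restrict j A
  left_inv g := by
    funext j p
    simp [restrict, Fin.tail_cons]
  right_inv A := by
    funext v
    simp only [restrict, Fin.cons_self_tail]

lemma restrict_childEquiv {d n : ℕ} (g : Fin d → Config d n) (j : Fin d) :
    restrict j (childEquiv d n g) = g j := by
  funext p
  simp [childEquiv, restrict, Fin.tail_cons]

/-- Expectations of products over children factor through the children. -/
lemma condE_prod (θ lam : ℝ) (d n : ℕ) (r : Fin 4) (g : Config d (n + 1) → ℝ)
    (f : Config d n → ℝ) (hg : ∀ A, g A = ∏ j : Fin d, f (restrict j A)) :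
    condE θ lam d (n + 1) r g
      = ∏ _j : Fin d, ∑ B : Config d n,
          (∑ k : Fin 4, trans θ lam r k * lik θ lam d n k B) * f B := by
  unfold condE
  have step1 : ∀ A : Config d (n + 1),
      lik θ lam d (n + 1) r A * g A
        = ∏ j : Fin d,
            ((∑ k : Fin 4, trans θ lam r k * lik θ lam d n k (restrict j A))
              * f (restrict j A)) := by
    intro A
    rw [hg, Finset.prod_mul_distrib]
    rfl
  simp only [step1]
  rw [Finset.prod_univ_sum, Fintype.piFinset_univ]
  exact Fintype.sum_equiv (childEquiv d n).symm
    (fun A => ∏ j : Fin d,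
      (∑ k : Fin 4, trans θ lam r k * lik θ lam d n k (restrict j A)) * f (restrict j A))
    (fun g => ∏ j : Fin d,
      (∑ k : Fin 4, trans θ lam r k * lik θ lam d n k (g j)) * f (g j))
    (fun A => rfl)

lemma sum_trans_mul (θ lam : ℝ) (r : Fin 4) (L : Fin 4 → ℝ) :
    ∑ k : Fin 4, trans θ lam r k * L k
      = lam * L r + (1 - lam) * ∑ k : Fin 4, rootDist θ k * L k := by
  simp only [trans, add_mul, Finset.sum_add_distrib, ite_mul, zero_mul,
    Finset.sum_ite_eq, Finset.mem_univ, if_true]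
  rw [Finset.mul_sum]
  congr 1
  exact Finset.sum_congr rfl fun k _ => by ring

/-- The key per-child identity, proved by the `0 ↔ 1` symmetry. -/
lemma key (θ lam : ℝ) (hθ : θ ≠ 0) (d n : ℕ) :
    ∑ B : Config d n,
        (∑ k : Fin 4, trans θ lam 0 k * lik θ lam d n k B) *
          ((1 + 2 * lam / θ * (post θ lam d n 0 B - θ / 2)) *
           (1 + 2 * lam / θ * (post θ lam d n 1 B - θ / 2)))
      = ∑ B : Config d n,
        (∑ k : Fin 4, trans θ lam 0 k * lik θ lam d n k B) *
          (1 + 2 * lam / θ * (post θ lam d n 1 B - θ / 2)) ^ 2 := by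
  rw [← sub_eq_zero, ← Finset.sum_sub_distrib]
  set h : Config d n → ℝ := fun B =>
    (∑ k : Fin 4, trans θ lam 0 k * lik θ lam d n k B) *
        ((1 + 2 * lam / θ * (post θ lam d n 0 B - θ / 2)) *
         (1 + 2 * lam / θ * (post θ lam d n 1 B - θ / 2))) -
      (∑ k : Fin 4, trans θ lam 0 k * lik θ lam d n k B) *
        (1 + 2 * lam / θ * (post θ lam d n 1 B - θ / 2)) ^ 2 with hh
  have hswap : ∑ B : Config d n, h B = ∑ B : Config d n, h (sw ∘ B) :=
    (Fintype.sum_equiv (Equiv.arrowCongr (Equiv.refl (Vtx d n)) sw)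
      (fun B => h (sw ∘ B)) h (fun B => congrArg h (funext fun p => rfl))).symm
  have hpt : ∀ B : Config d n, h B + h (sw ∘ B) = 0 := by
    intro B
    rw [hh]
    simp only [post_sw, sw0, sw1]
    rw [sum_trans_mul θ lam 0 (fun k => lik θ lam d n k B),
        sum_trans_mul θ lam 0 (fun k => lik θ lam d n k (sw ∘ B))]
    simp only [lik_comp, sw0]
    have hm1 : ∑ k : Fin 4, rootDist θ k * lik θ lam d n k B = marg θ lam d n B := rfl
    have hm2 : ∑ k : Fin 4, rootDist θ k * lik θ lam d n (sw k) B = marg θ lam d n B := by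
      refine Fintype.sum_equiv sw (fun k => rootDist θ k * lik θ lam d n (sw k) B)
        (fun k => rootDist θ k * lik θ lam d n k B) fun k => ?_
      rw [rootDist_sw]
    rw [hm1, hm2]
    simp only [post]
    rw [show rootDist θ 0 = θ / 2 from rfl, show rootDist θ 1 = θ / 2 from rfl]
    set M := marg θ lam d n B
    set L0 := lik θ lam d n 0 B
    set L1 := lik θ lam d n 1 B
    rcases eq_or_ne M 0 with hM | hM
    · rw [hM]
      simp only [div_zero]
      ring
    · field_simp
      ring
  have h2 : (2 : ℝ) * ∑ B : Config d n, h B = 0 := by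
    rw [two_mul]
    nth_rewrite 2 [hswap]
    rw [← Finset.sum_add_distrib]
    exact Finset.sum_eq_zero fun B _ => hpt B
  linarith

/-- `E(Z₁(n)Z₂(n)) = E(Z₂(n)²)`. -/
theorem Z1Z2_eq_Z2sq (θ lam : ℝ) (hθ : θ ∈ Set.Ioo (0 : ℝ) 1) (hlam : |lam| ≤ 1)
    (hP : ∀ i j : Fin 4, 0 ≤ trans θ lam i j) (d : ℕ) (hd : 2 ≤ d) (n : ℕ) :
    condE θ lam d (n + 1) 0 (fun A => Zf θ lam d n 0 A * Zf θ lam d n 1 A)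
      = condE θ lam d (n + 1) 0 (fun A => Zf θ lam d n 1 A ^ 2) := by
  have hθ0 : θ ≠ 0 := ne_of_gt hθ.1
  have hv0 : ((0 : Fin 4) : ℕ) < 2 := by decide
  have hv1 : ((1 : Fin 4) : ℕ) < 2 := by decide
  rw [condE_prod θ lam d n 0 _
      (fun B => (1 + 2 * lam / θ * (post θ lam d n 0 B - θ / 2)) *
        (1 + 2 * lam / θ * (post θ lam d n 1 B - θ / 2)))
      (fun A => by
        simp only [Zf, Yf, if_pos hv0, if_pos hv1]
        rw [← Finset.prod_mul_distrib]),
    condE_prod θ lam d n 0 _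
      (fun B => (1 + 2 * lam / θ * (post θ lam d n 1 B - θ / 2)) ^ 2)
      (fun A => by
        simp only [Zf, Yf, if_pos hv1]
        rw [← Finset.prod_pow])]
  exact Finset.prod_congr rfl fun j _ => key θ lam hθ0 d n


end Broadcast
end

section
/- Assume dλ² ≤ 1. There exists a constant C depending only on θ such that for all n ≥ 0: |E[Z₁(n)] − 1 − (2/θ)dλ²·x_{n;θ} − (2/θ²)d(d−1)λ⁴·x_{n;θ}²| ≤ C·x_{n;θ}³. -/
open Finset Filter

namespace Broadcast

-- aux
lemma rootDist_sum (θ : ℝ) : ∑ i : Fin 4, rootDist θ i = 1 := by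
  have h3 : ¬ ((3 : Fin 4) : ℕ) < 2 := by decide
  have h2 : ¬ ((2 : Fin 4) : ℕ) < 2 := by decide
  simp [Fin.sum_univ_four, rootDist, h2, h3]; ring

lemma trans_row_sum (θ lam : ℝ) (i : Fin 4) : ∑ k : Fin 4, trans θ lam i k = 1 := by
  have h3 : ¬ ((3 : Fin 4) : ℕ) < 2 := by decide
  have h2 : ¬ ((2 : Fin 4) : ℕ) < 2 := by decide
  fin_cases i <;> simp [Fin.sum_univ_four, trans, rootDist, h2, h3] <;> ring

lemma rootDist_nonneg {θ : ℝ} (hθ : θ ∈ Set.Ioo (0:ℝ) 1) (i : Fin 4) : 0 ≤ rootDist θ i := by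
  obtain ⟨h0, h1⟩ := hθ
  unfold rootDist; split <;> linarith

lemma lik_nonneg {θ lam : ℝ} {d : ℕ} (htr : ∀ i j, 0 ≤ trans θ lam i j) :
    ∀ (n : ℕ) (i : Fin 4) (A : Config d n), 0 ≤ lik θ lam d n i A
  | 0, i, A => by unfold lik; positivity
  | n + 1, i, A => Finset.prod_nonneg fun j _ => Finset.sum_nonneg fun k _ =>
      mul_nonneg (htr i k) (lik_nonneg htr n k _)

def consEquiv (d n : ℕ) : Config d (n + 1) ≃ (Fin d → Config d n) where
  toFun A j := restrict j A
  invFun B p := B (p 0) (fun i => p i.succ)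
  left_inv A := by
    funext p
    show A (Fin.cons (p 0) (fun i => p i.succ) : Fin (n+1) → Fin d) = A p
    rw [show (Fin.cons (p 0) (fun i => p i.succ) : Fin (n+1) → Fin d) = p from
      Fin.cons_self_tail p]
  right_inv B := by
    funext j p
    simp only [restrict, Fin.cons_zero, Fin.cons_succ]

lemma sum_prod_restrict {d n : ℕ} (F : Fin d → Config d n → ℝ) :
    ∑ A : Config d (n + 1), ∏ j : Fin d, F j (restrict j A)
      = ∏ j : Fin d, ∑ B : Config d n, F j B := by
  rw [Finset.prod_univ_sum, Fintype.piFinset_univ]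
  exact Fintype.sum_equiv (consEquiv d n) _ _ (fun A => rfl)

lemma lik_sum_one (θ lam : ℝ) (d : ℕ) :
    ∀ (n : ℕ) (i : Fin 4), ∑ A : Config d n, lik θ lam d n i A = 1
  | 0, i => by
    rw [Fintype.sum_equiv (Equiv.funUnique (Vtx d 0) (Fin 4)) _
      (fun c => if c = i then (1:ℝ) else 0)]
    · simp
    · intro A
      unfold lik
      congr 1
  | n + 1, i => by
    show ∑ A : Config d (n+1), ∏ j : Fin d,
        (∑ k : Fin 4, trans θ lam i k * lik θ lam d n k (restrict j A)) = 1
    rw [sum_prod_restrict (fun j B => ∑ k : Fin 4, trans θ lam i k * lik θ lam d n k B)]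
    have : ∀ j : Fin d, (∑ B : Config d n, ∑ k : Fin 4, trans θ lam i k * lik θ lam d n k B) = 1 := by
      intro j
      rw [Finset.sum_comm]
      have : ∀ k : Fin 4, ∑ B : Config d n, trans θ lam i k * lik θ lam d n k B
          = trans θ lam i k := by
        intro k; rw [← Finset.mul_sum, lik_sum_one θ lam d n k, mul_one]
      rw [Finset.sum_congr rfl fun k _ => this k, trans_row_sum]
    rw [Finset.prod_congr rfl fun j _ => this j, Finset.prod_const_one]

section Main
variable {θ lam : ℝ} {d n : ℕ}

lemma marg_sum_one (θ lam : ℝ) (d n : ℕ) : ∑ A : Config d n, marg θ lam d n A = 1 := by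
  unfold marg
  rw [Finset.sum_comm]
  have : ∀ i : Fin 4, ∑ A : Config d n, rootDist θ i * lik θ lam d n i A = rootDist θ i := by
    intro i; rw [← Finset.mul_sum, lik_sum_one, mul_one]
  rw [Finset.sum_congr rfl fun i _ => this i, rootDist_sum]

lemma marg_nonneg (hθ : θ ∈ Set.Ioo (0:ℝ) 1) (htr : ∀ i j, 0 ≤ trans θ lam i j)
    (A : Config d n) : 0 ≤ marg θ lam d n A :=
  Finset.sum_nonneg fun i _ => mul_nonneg (rootDist_nonneg hθ i) (lik_nonneg htr n i A)

lemma marg_mul_post (hθ : θ ∈ Set.Ioo (0:ℝ) 1) (htr : ∀ i j, 0 ≤ trans θ lam i j)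
    (i : Fin 4) (A : Config d n) :
    marg θ lam d n A * post θ lam d n i A = rootDist θ i * lik θ lam d n i A := by
  unfold post
  rcases eq_or_ne (marg θ lam d n A) 0 with h | h
  · rw [h, zero_mul]
    have := (Finset.sum_eq_zero_iff_of_nonneg
      (fun j _ => mul_nonneg (rootDist_nonneg hθ j) (lik_nonneg htr n j A))).1 h
    exact (this i (Finset.mem_univ i)).symm
  · field_simp

lemma post_nonneg (hθ : θ ∈ Set.Ioo (0:ℝ) 1) (htr : ∀ i j, 0 ≤ trans θ lam i j)
    (i : Fin 4) (A : Config d n) : 0 ≤ post θ lam d n i A :=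
  div_nonneg (mul_nonneg (rootDist_nonneg hθ i) (lik_nonneg htr n i A)) (marg_nonneg hθ htr A)

lemma post_le_one (hθ : θ ∈ Set.Ioo (0:ℝ) 1) (htr : ∀ i j, 0 ≤ trans θ lam i j)
    (i : Fin 4) (A : Config d n) : post θ lam d n i A ≤ 1 := by
  unfold post
  rcases eq_or_ne (marg θ lam d n A) 0 with h | h
  · rw [h, div_zero]; norm_num
  · rw [div_le_one (lt_of_le_of_ne (marg_nonneg hθ htr A) (Ne.symm h))]
    exact Finset.single_le_sum
      (fun j _ => mul_nonneg (rootDist_nonneg hθ j) (lik_nonneg htr n j A)) (Finset.mem_univ i)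

lemma rootDist_zero (θ : ℝ) : rootDist θ 0 = θ / 2 := by simp [rootDist]

lemma sum_marg_post (hθ : θ ∈ Set.Ioo (0:ℝ) 1) (htr : ∀ i j, 0 ≤ trans θ lam i j) :
    ∑ A : Config d n, marg θ lam d n A * post θ lam d n 0 A = θ / 2 := by
  rw [Finset.sum_congr rfl fun A _ => marg_mul_post hθ htr 0 A, ← Finset.mul_sum,
    lik_sum_one, mul_one, rootDist_zero]

lemma sum_lik_post (hθ : θ ∈ Set.Ioo (0:ℝ) 1) :
    ∑ A : Config d n, lik θ lam d n 0 A * post θ lam d n 0 A = xT θ lam d n + θ / 2 := by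
  unfold xT condE; ring

lemma lik_eq_marg_post (hθ : θ ∈ Set.Ioo (0:ℝ) 1) (htr : ∀ i j, 0 ≤ trans θ lam i j)
    (A : Config d n) :
    lik θ lam d n 0 A = 2 / θ * (marg θ lam d n A * post θ lam d n 0 A) := by
  rw [marg_mul_post hθ htr 0 A, rootDist_zero]
  have h0 : θ ≠ 0 := ne_of_gt hθ.1
  field_simp

lemma xT_nonneg (hθ : θ ∈ Set.Ioo (0:ℝ) 1) (htr : ∀ i j, 0 ≤ trans θ lam i j) :
    0 ≤ xT θ lam d n := by
  have h0 : (0:ℝ) < θ := hθ.1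
  have hcs := Finset.sum_mul_sq_le_sq_mul_sq Finset.univ
    (fun A : Config d n => Real.sqrt (marg θ lam d n A))
    (fun A => Real.sqrt (marg θ lam d n A) * post θ lam d n 0 A)
  have hm : ∀ A : Config d n,
      Real.sqrt (marg θ lam d n A) * (Real.sqrt (marg θ lam d n A) * post θ lam d n 0 A)
        = marg θ lam d n A * post θ lam d n 0 A := by
    intro A
    rw [← mul_assoc, Real.mul_self_sqrt (marg_nonneg hθ htr A)]
  have hm2 : ∀ A : Config d n, Real.sqrt (marg θ lam d n A) ^ 2 = marg θ lam d n A :=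
    fun A => Real.sq_sqrt (marg_nonneg hθ htr A)
  have hm3 : ∀ A : Config d n,
      (Real.sqrt (marg θ lam d n A) * post θ lam d n 0 A) ^ 2
        = marg θ lam d n A * post θ lam d n 0 A ^ 2 := by
    intro A
    rw [mul_pow, hm2]
  rw [Finset.sum_congr rfl fun A _ => hm A,
      Finset.sum_congr rfl fun A _ => hm2 A,
      Finset.sum_congr rfl fun A _ => hm3 A,
      sum_marg_post hθ htr, marg_sum_one, one_mul] at hcs
  -- hcs : (θ/2)^2 ≤ ∑ marg * post^2
  have hx : xT θ lam d n + θ / 2 = 2 / θ * ∑ A : Config d n, marg θ lam d n A * post θ lam d n 0 A ^ 2 := by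
    rw [← sum_lik_post hθ, Finset.mul_sum]
    refine Finset.sum_congr rfl fun A _ => ?_
    rw [lik_eq_marg_post hθ htr A]; ring
  have : 2 / θ * (θ / 2) ^ 2 ≤ 2 / θ * ∑ A : Config d n, marg θ lam d n A * post θ lam d n 0 A ^ 2 := by
    apply mul_le_mul_of_nonneg_left hcs
    positivity
  rw [← hx] at this
  have : θ / 2 ≤ xT θ lam d n + θ / 2 := by
    calc θ / 2 = 2 / θ * (θ / 2) ^ 2 := by field_simp
    _ ≤ _ := this
  linarith

lemma xT_le_one (hθ : θ ∈ Set.Ioo (0:ℝ) 1) (htr : ∀ i j, 0 ≤ trans θ lam i j) :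
    xT θ lam d n ≤ 1 := by
  have h1 : ∑ A : Config d n, lik θ lam d n 0 A * post θ lam d n 0 A
      ≤ ∑ A : Config d n, lik θ lam d n 0 A * 1 := by
    refine Finset.sum_le_sum fun A _ => ?_
    exact mul_le_mul_of_nonneg_left (post_le_one hθ htr 0 A) (lik_nonneg htr n 0 A)
  simp only [mul_one] at h1
  rw [lik_sum_one] at h1
  have := sum_lik_post (lam := lam) (d := d) (n := n) hθ
  have h0 : (0:ℝ) < θ := hθ.1
  linarith [this ▸ h1]

end Main

section Main2
variable {θ lam : ℝ} {d n : ℕ}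

lemma trans_zero_expand (hθ : θ ∈ Set.Ioo (0:ℝ) 1) (B : Config d n) :
    ∑ k : Fin 4, trans θ lam 0 k * lik θ lam d n k B
      = lam * lik θ lam d n 0 B + (1 - lam) * marg θ lam d n B := by
  have e01 : ((0 : Fin 4) = 1) = False := by decide
  have e02 : ((0 : Fin 4) = 2) = False := by decide
  have e03 : ((0 : Fin 4) = 3) = False := by decide
  simp only [Fin.sum_univ_four, trans, marg, e01, e02, e03, if_false, eq_self_iff_true, if_true]
  ring

lemma condE_Zf (hθ : θ ∈ Set.Ioo (0:ℝ) 1) (htr : ∀ i j, 0 ≤ trans θ lam i j) :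
    condE θ lam d (n + 1) 0 (fun A => Zf θ lam d n 0 A)
      = (1 + 2 * lam ^ 2 / θ * xT θ lam d n) ^ d := by
  have hθ0 : θ ≠ 0 := ne_of_gt hθ.1
  have hZ : ∀ A : Config d (n + 1), Zf θ lam d n 0 A
      = ∏ j : Fin d, (1 + 2 * lam / θ * (post θ lam d n 0 (restrict j A) - θ / 2)) := by
    intro A
    rw [Zf, if_pos (by decide : ((0 : Fin 4) : ℕ) < 2)]
    rfl
  have hL : ∀ A : Config d (n + 1), lik θ lam d (n + 1) 0 A
      = ∏ j : Fin d, ∑ k : Fin 4, trans θ lam 0 k * lik θ lam d n k (restrict j A) := fun A => rfl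
  unfold condE
  have step : ∀ A : Config d (n + 1), lik θ lam d (n + 1) 0 A * Zf θ lam d n 0 A
      = ∏ j : Fin d, ((∑ k : Fin 4, trans θ lam 0 k * lik θ lam d n k (restrict j A)) *
          (1 + 2 * lam / θ * (post θ lam d n 0 (restrict j A) - θ / 2))) := by
    intro A
    rw [hZ A, hL A, ← Finset.prod_mul_distrib]
  rw [Finset.sum_congr rfl fun A _ => step A,
    sum_prod_restrict (fun j B => (∑ k : Fin 4, trans θ lam 0 k * lik θ lam d n k B) *
      (1 + 2 * lam / θ * (post θ lam d n 0 B - θ / 2)))]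
  have inner : (∑ B : Config d n, (∑ k : Fin 4, trans θ lam 0 k * lik θ lam d n k B) *
      (1 + 2 * lam / θ * (post θ lam d n 0 B - θ / 2)))
      = 1 + 2 * lam ^ 2 / θ * xT θ lam d n := by
    have expand : ∀ B : Config d n,
        (∑ k : Fin 4, trans θ lam 0 k * lik θ lam d n k B) *
          (1 + 2 * lam / θ * (post θ lam d n 0 B - θ / 2))
        = lam * lik θ lam d n 0 B + (1 - lam) * marg θ lam d n B
          + (2 * lam / θ * lam) * (lik θ lam d n 0 B * post θ lam d n 0 B)
          - (2 * lam / θ * lam * (θ / 2)) * lik θ lam d n 0 B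
          + (2 * lam / θ * (1 - lam)) * (marg θ lam d n B * post θ lam d n 0 B)
          - (2 * lam / θ * (1 - lam) * (θ / 2)) * marg θ lam d n B := by
      intro B
      rw [trans_zero_expand hθ B]
      ring
    rw [Finset.sum_congr rfl fun B _ => expand B]
    rw [Finset.sum_sub_distrib, Finset.sum_add_distrib, Finset.sum_sub_distrib,
      Finset.sum_add_distrib, Finset.sum_add_distrib, ← Finset.mul_sum, ← Finset.mul_sum,
      ← Finset.mul_sum, ← Finset.mul_sum, ← Finset.mul_sum, ← Finset.mul_sum,
      lik_sum_one, marg_sum_one, sum_lik_post hθ, sum_marg_post hθ htr]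
    field_simp
    ring
  rw [Finset.prod_congr rfl fun j _ => inner, Finset.prod_const, Finset.card_univ,
    Fintype.card_fin]

end Main2


/-- There is a constant `C` depending only on `θ` such that
`|E Z₁ - 1 - (2/θ)dλ²x_{n;θ} - (2/θ²)d(d-1)λ⁴x_{n;θ}²| ≤ C·x_{n;θ}³`. -/
theorem EZ1_expansion (θ : ℝ) (hθ : θ ∈ Set.Ioo (0 : ℝ) 1) :
    ∃ C : ℝ, ∀ d : ℕ, 2 ≤ d → ∀ lam : ℝ, |lam| ≤ 1 →
      (∀ i j : Fin 4, 0 ≤ trans θ lam i j) → (d : ℝ) * lam ^ 2 ≤ 1 → ∀ n : ℕ,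
      |condE θ lam d (n + 1) 0 (fun A => Zf θ lam d n 0 A) - 1
          - 2 / θ * ((d : ℝ) * lam ^ 2) * xT θ lam d n
          - 2 / θ ^ 2 * ((d : ℝ) * ((d : ℝ) - 1) * lam ^ 4) * xT θ lam d n ^ 2|
        ≤ C * xT θ lam d n ^ 3 := by
  refine ⟨Real.exp (2 / θ), fun d hd lam hlam htr hdl n => ?_⟩
  have hθ0 : (0:ℝ) < θ := hθ.1
  have hθ0' : θ ≠ 0 := ne_of_gt hθ0
  set x := xT θ lam d n with hxdef
  have hx0 : 0 ≤ x := xT_nonneg hθ htr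
  have hx1 : x ≤ 1 := xT_le_one hθ htr
  set a : ℝ := 2 * lam ^ 2 / θ with hadef
  have ha0 : 0 ≤ a := by positivity
  set t : ℝ := a * x with htdef
  have ht0 : 0 ≤ t := mul_nonneg ha0 hx0
  have hEZ : condE θ lam d (n + 1) 0 (fun A => Zf θ lam d n 0 A) = (1 + a * x) ^ d := by
    rw [condE_Zf hθ htr]
  have hb : ∀ b : ℝ, (1 + b) ^ d = ∑ k ∈ Finset.range (d + 1), b ^ k * ((d.choose k : ℝ)) := by
    intro b
    rw [add_comm 1 b, add_pow]
    exact Finset.sum_congr rfl fun k _ => by rw [one_pow, mul_one]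
  have hbin : (1 + t) ^ d = ∑ k ∈ Finset.range (d + 1), t ^ k * ((d.choose k : ℝ)) := hb t
  have hsplit : ∑ k ∈ Finset.range 3, t ^ k * ((d.choose k : ℝ))
      + ∑ k ∈ Finset.Ico 3 (d + 1), t ^ k * ((d.choose k : ℝ))
      = ∑ k ∈ Finset.range (d + 1), t ^ k * ((d.choose k : ℝ)) :=
    Finset.sum_range_add_sum_Ico _ (by omega)
  have hhead : ∑ k ∈ Finset.range 3, t ^ k * ((d.choose k : ℝ))
      = 1 + (d : ℝ) * t + (d : ℝ) * ((d : ℝ) - 1) / 2 * t ^ 2 := by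
    rw [Finset.sum_range_succ, Finset.sum_range_succ, Finset.sum_range_one]
    rw [Nat.choose_zero_right, Nat.choose_one_right, Nat.cast_choose_two]
    push_cast
    ring
  have hmain : condE θ lam d (n + 1) 0 (fun A => Zf θ lam d n 0 A) - 1
      - 2 / θ * ((d : ℝ) * lam ^ 2) * x
      - 2 / θ ^ 2 * ((d : ℝ) * ((d : ℝ) - 1) * lam ^ 4) * x ^ 2
      = ∑ k ∈ Finset.Ico 3 (d + 1), t ^ k * ((d.choose k : ℝ)) := by
    rw [hEZ, ← htdef, hbin, ← hsplit, hhead]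
    have h1 : 2 / θ * ((d : ℝ) * lam ^ 2) * x = (d : ℝ) * t := by
      rw [htdef, hadef]; ring
    have h2 : 2 / θ ^ 2 * ((d : ℝ) * ((d : ℝ) - 1) * lam ^ 4) * x ^ 2
        = (d : ℝ) * ((d : ℝ) - 1) / 2 * t ^ 2 := by
      rw [htdef, hadef]
      field_simp
    rw [h1, h2]
    ring
  rw [hmain, abs_of_nonneg (Finset.sum_nonneg fun k _ =>
    mul_nonneg (pow_nonneg ht0 k) (Nat.cast_nonneg _))]
  have hterm : ∀ k ∈ Finset.Ico 3 (d + 1),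
      t ^ k * ((d.choose k : ℝ)) ≤ x ^ 3 * (a ^ k * ((d.choose k : ℝ))) := by
    intro k hk
    have hk3 : 3 ≤ k := (Finset.mem_Ico.1 hk).1
    have : t ^ k = a ^ k * x ^ k := by rw [htdef, mul_pow]
    rw [this]
    have hxk : x ^ k ≤ x ^ 3 := pow_le_pow_of_le_one hx0 hx1 hk3
    calc a ^ k * x ^ k * ((d.choose k : ℝ)) ≤ a ^ k * x ^ 3 * ((d.choose k : ℝ)) := by
          apply mul_le_mul_of_nonneg_right _ (Nat.cast_nonneg _)
          exact mul_le_mul_of_nonneg_left hxk (pow_nonneg ha0 k)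
      _ = x ^ 3 * (a ^ k * ((d.choose k : ℝ))) := by ring
  calc ∑ k ∈ Finset.Ico 3 (d + 1), t ^ k * ((d.choose k : ℝ))
      ≤ ∑ k ∈ Finset.Ico 3 (d + 1), x ^ 3 * (a ^ k * ((d.choose k : ℝ))) :=
        Finset.sum_le_sum hterm
    _ = x ^ 3 * ∑ k ∈ Finset.Ico 3 (d + 1), a ^ k * ((d.choose k : ℝ)) := by
        rw [Finset.mul_sum]
    _ ≤ x ^ 3 * ∑ k ∈ Finset.range (d + 1), a ^ k * ((d.choose k : ℝ)) := by
        apply mul_le_mul_of_nonneg_left _ (by positivity)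
        apply Finset.sum_le_sum_of_subset_of_nonneg
        · intro k hk
          simp only [Finset.mem_Ico] at hk
          exact Finset.mem_range.2 hk.2
        · intro k _ _
          exact mul_nonneg (pow_nonneg ha0 k) (Nat.cast_nonneg _)
    _ = x ^ 3 * (1 + a) ^ d := by rw [hb a]
    _ ≤ x ^ 3 * Real.exp (2 / θ) := by
        apply mul_le_mul_of_nonneg_left _ (by positivity)
        calc (1 + a) ^ d ≤ Real.exp a ^ d := by
              apply pow_le_pow_left₀ (by positivity)
              linarith [Real.add_one_le_exp a]
          _ = Real.exp ((d : ℝ) * a) := (Real.exp_nat_mul a d).symm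
          _ ≤ Real.exp (2 / θ) := by
              apply Real.exp_le_exp.2
              have : (d : ℝ) * a = 2 * ((d : ℝ) * lam ^ 2) / θ := by rw [hadef]; ring
              rw [this]
              calc 2 * ((d : ℝ) * lam ^ 2) / θ ≤ 2 * 1 / θ := by gcongr
                _ = 2 / θ := by ring
    _ = Real.exp (2 / θ) * x ^ 3 := by ring

end Broadcast
end
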